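/- Every finite two-player zero-sum game admits a saddle point in mixed strategies: for any payoff matrix A : Fin m → Fin n → ℝ with m, n ≥ 1, there exist mixed strategies Φ* in the standard simplex of ℝ^m and Θ* in the standard simplex of ℝ^n such that J(Φ,Θ*) ≤ J(Φ*,Θ*) ≤ J(Φ*,Θ) for all mixed strategies Φ and Θ. -/

import Mathlib

open Finset

/-- Defender's expected payoff in the finite zero-sum game with matrix `A`. -/
def J {m n : ℕ} (A : Fin m → Fin n → ℝ) (Φ : Fin m → ℝ) (Θ : Fin n → ℝ) : ℝ :=
  ∑ j, ∑ i, Φ j * A j i * Θ i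

/-- Theorem of the alternative via Hahn–Banach separation: if for every mixed strategy `Θ`
some row of `B • Θ` is positive, then some mixed strategy `Φ` gives a positive payoff
against every `Θ`. -/
lemma key_alt {m n : ℕ} [NeZero m] [NeZero n] (B : Fin m → Fin n → ℝ)
    (h : ∀ Θ ∈ stdSimplex ℝ (Fin n), ∃ j, 0 < ∑ i, B j i * Θ i) :
    ∃ Φ ∈ stdSimplex ℝ (Fin m), ∀ Θ ∈ stdSimplex ℝ (Fin n),
      0 < ∑ j, Φ j * ∑ i, B j i * Θ i := by
  classical
  set L : (Fin n → ℝ) →ₗ[ℝ] (Fin m → ℝ) := (Matrix.of B).mulVecLin with hL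
  have hLapp : ∀ Θ j, L Θ j = ∑ i, B j i * Θ i := by
    intro Θ j
    simp [hL, Matrix.mulVecLin_apply, Matrix.mulVec, dotProduct]
  set K : Set (Fin m → ℝ) := L '' stdSimplex ℝ (Fin n) with hK
  have hKcomp : IsCompact K := (isCompact_stdSimplex ℝ _).image L.continuous_on_pi
  have hKconv : Convex ℝ K := (convex_stdSimplex ℝ _).linear_image L
  set T : Set (Fin m → ℝ) := ⋂ j, {y | y j ≤ 0} with hT
  have hTclosed : IsClosed T :=
    isClosed_iInter fun j => isClosed_le (continuous_apply j) continuous_const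
  have hTconv : Convex ℝ T := by
    refine convex_iInter fun j => ?_
    intro y hy z hz a b ha hb hab
    simp only [Set.mem_setOf_eq] at hy hz ⊢
    have : a * y j + b * z j ≤ 0 :=
      add_nonpos (mul_nonpos_of_nonneg_of_nonpos ha hy)
        (mul_nonpos_of_nonneg_of_nonpos hb hz)
    simpa using this
  have hdisj : Disjoint T K := by
    rw [Set.disjoint_left]
    rintro y hy ⟨Θ, hΘ, rfl⟩
    obtain ⟨j, hj⟩ := h Θ hΘ
    have : L Θ j ≤ 0 := Set.mem_iInter.1 hy j
    rw [hLapp] at this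
    linarith
  obtain ⟨f, u, v, hfT, huv, hfK⟩ :=
    geometric_hahn_banach_closed_compact hTconv hTclosed hKconv hKcomp hdisj
  have h0T : (0 : Fin m → ℝ) ∈ T := Set.mem_iInter.2 fun j => by simp
  have hu0 : (0 : ℝ) < u := by have := hfT 0 h0T; simpa using this
  have hv0 : (0 : ℝ) < v := lt_trans hu0 huv
  set e : Fin m → (Fin m → ℝ) := fun j k => if j = k then 1 else 0 with he
  set c : Fin m → ℝ := fun j => f (e j) with hc
  have hcnonneg : ∀ j, 0 ≤ c j := by
    intro j
    by_contra hcj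
    push_neg at hcj
    set t : ℝ := (max u 0 + 1) / (-c j) with ht
    have hcj' : 0 < -c j := by linarith
    have htpos : 0 < t := div_pos (by positivity) hcj'
    have hyT : (-t) • e j ∈ T := by
      refine Set.mem_iInter.2 fun k => ?_
      have h1 : (0:ℝ) ≤ e j k := by
        simp only [he]
        split <;> norm_num
      have : (-t) * e j k ≤ 0 :=
        mul_nonpos_of_nonpos_of_nonneg (by linarith) h1
      simpa using this
    have hlt := hfT _ hyT
    rw [map_smul] at hlt
    have heq : (-t) • f (e j) = t * (-c j) := by
      simp only [hc, smul_eq_mul]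
      ring
    rw [heq, ht, div_mul_cancel₀ _ (ne_of_gt hcj')] at hlt
    have := le_max_left u 0
    linarith
  set S : ℝ := ∑ j, c j with hS
  have hfx : ∀ x : Fin m → ℝ, f x = ∑ j, x j * c j := by
    intro x
    have := LinearMap.pi_apply_eq_sum_univ (f : (Fin m → ℝ) →ₗ[ℝ] ℝ) x
    simpa [hc, he, smul_eq_mul] using this
  have hSpos : 0 < S := by
    rcases lt_or_eq_of_le (Finset.sum_nonneg fun j _ => hcnonneg j) with h' | h'
    · exact h'
    · exfalso
      have hzero : ∀ j ∈ Finset.univ, c j = 0 :=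
        (Finset.sum_eq_zero_iff_of_nonneg fun j _ => hcnonneg j).1 h'.symm
      have hΘ0 : (Pi.single 0 (1:ℝ)) ∈ stdSimplex ℝ (Fin n) :=
        single_mem_stdSimplex ℝ 0
      have := hfK _ ⟨_, hΘ0, rfl⟩
      rw [hfx] at this
      have : (0:ℝ) < v → False := by
        intro _
        have hz : ∑ j, L (Pi.single 0 (1:ℝ)) j * c j = 0 :=
          Finset.sum_eq_zero fun j hj => by rw [hzero j hj, mul_zero]
        rw [hz] at this
        linarith
      exact this hv0
  refine ⟨fun j => c j / S, ⟨fun j => div_nonneg (hcnonneg j) hSpos.le, ?_⟩, ?_⟩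
  · rw [← Finset.sum_div, ← hS, div_self (ne_of_gt hSpos)]
  · intro Θ hΘ
    have hfLΘ := hfK _ ⟨Θ, hΘ, rfl⟩
    rw [hfx] at hfLΘ
    have heq : ∑ j, (c j / S) * ∑ i, B j i * Θ i
        = (∑ j, L Θ j * c j) / S := by
      rw [Finset.sum_div]
      refine Finset.sum_congr rfl fun j _ => ?_
      rw [hLapp]
      ring
    rw [heq]
    exact div_pos (lt_trans hv0 hfLΘ) hSpos

/-- Every finite two-player zero-sum game admits a saddle point in mixed strategies. -/
theorem stmt2 {m n : ℕ} (hm : 1 ≤ m) (hn : 1 ≤ n) (A : Fin m → Fin n → ℝ) :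
    ∃ Φs ∈ stdSimplex ℝ (Fin m), ∃ Θs ∈ stdSimplex ℝ (Fin n),
      (∀ Φ ∈ stdSimplex ℝ (Fin m), J A Φ Θs ≤ J A Φs Θs) ∧
      (∀ Θ ∈ stdSimplex ℝ (Fin n), J A Φs Θs ≤ J A Φs Θ) := by
  classical
  haveI : NeZero m := ⟨by omega⟩
  haveI : NeZero n := ⟨by omega⟩
  -- the function `g Θ = max_j (A Θ)_j`
  set g : (Fin n → ℝ) → ℝ :=
    fun Θ => Finset.univ.sup' Finset.univ_nonempty (fun j => ∑ i, A j i * Θ i) with hg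
  have hgcont : Continuous g := by
    apply Continuous.finset_sup'_apply Finset.univ_nonempty
    intro j _
    exact continuous_finset_sum _ fun i _ => continuous_const.mul (continuous_apply i)
  obtain ⟨Θs, hΘs, hminOn⟩ := (isCompact_stdSimplex ℝ (Fin n)).exists_isMinOn
    ⟨Pi.single 0 1, single_mem_stdSimplex ℝ 0⟩ hgcont.continuousOn
  set v : ℝ := g Θs with hv
  have hmin : ∀ Θ ∈ stdSimplex ℝ (Fin n), v ≤ g Θ := fun Θ hΘ => hminOn hΘ
  have hrow : ∀ j, ∑ i, A j i * Θs i ≤ v := fun j =>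
    Finset.le_sup' (fun j => ∑ i, A j i * Θs i) (Finset.mem_univ j)
  -- for each `k`, get an approximately optimal `Φ`
  have happrox : ∀ k : ℕ, ∃ Φ ∈ stdSimplex ℝ (Fin m),
      ∀ i, v - 1/(k+1 : ℝ) ≤ ∑ j, Φ j * A j i := by
    intro k
    set ε : ℝ := 1/(k+1 : ℝ) with hε
    have hεpos : 0 < ε := by positivity
    have hB : ∀ Θ ∈ stdSimplex ℝ (Fin n), ∃ j, 0 < ∑ i, (A j i - v + ε) * Θ i := by
      intro Θ hΘ
      obtain ⟨j, _, hj⟩ := Finset.exists_mem_eq_sup' Finset.univ_nonempty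
        (fun j => ∑ i, A j i * Θ i)
      refine ⟨j, ?_⟩
      have hgΘ : v ≤ ∑ i, A j i * Θ i := by
        have := hmin Θ hΘ
        rw [hg] at this
        rw [← hj]
        exact this
      have hexp : ∑ i, (A j i - v + ε) * Θ i
          = (∑ i, A j i * Θ i) + (ε - v) * ∑ i, Θ i := by
        rw [Finset.mul_sum, ← Finset.sum_add_distrib]
        refine Finset.sum_congr rfl fun i _ => ?_
        ring
      rw [hexp, hΘ.2, mul_one]
      linarith
    obtain ⟨Φ, hΦ, hΦpos⟩ := key_alt (fun j i => A j i - v + ε) hB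
    refine ⟨Φ, hΦ, fun i => ?_⟩
    have := hΦpos (fun i' => if i = i' then 1 else 0) (ite_eq_mem_stdSimplex ℝ i)
    have hsingle : ∀ j, ∑ i', (A j i' - v + ε) * (if i = i' then (1:ℝ) else 0)
        = A j i - v + ε := by
      intro j
      rw [Finset.sum_eq_single i]
      · simp
      · intro b _ hb; simp [Ne.symm hb]
      · simp
    simp only [hsingle] at this
    have hexp : ∑ j, Φ j * (A j i - v + ε)
        = (∑ j, Φ j * A j i) + (ε - v) * ∑ j, Φ j := by
      rw [Finset.mul_sum]
      rw [← Finset.sum_add_distrib]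
      refine Finset.sum_congr rfl fun j _ => ?_
      ring
    rw [hexp] at this
    rw [hΦ.2] at this
    rw [mul_one] at this
    linarith
  -- nested compact sets
  set S : ℕ → Set (Fin m → ℝ) := fun k =>
    stdSimplex ℝ (Fin m) ∩ ⋂ i, {Φ | v - 1/(k+1 : ℝ) ≤ ∑ j, Φ j * A j i} with hSdef
  have hSclosed : ∀ k, IsClosed (S k) := by
    intro k
    refine (isClosed_stdSimplex ℝ _).inter (isClosed_iInter fun i => isClosed_le
      continuous_const ?_)
    exact continuous_finset_sum _ fun j _ => (continuous_apply j).mul continuous_const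
  have hScompact : ∀ k, IsCompact (S k) := fun k =>
    (isCompact_stdSimplex ℝ _).inter_right
      (isClosed_iInter fun i => isClosed_le continuous_const
        (continuous_finset_sum _ fun j _ => (continuous_apply j).mul continuous_const))
  have hSnonempty : ∀ k, (S k).Nonempty := by
    intro k
    obtain ⟨Φ, hΦ, hΦ'⟩ := happrox k
    exact ⟨Φ, hΦ, Set.mem_iInter.2 fun i => hΦ' i⟩
  have hSmono : ∀ k, S (k+1) ⊆ S k := by
    intro k Φ hΦ
    refine ⟨hΦ.1, Set.mem_iInter.2 fun i => ?_⟩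
    have h1 := Set.mem_iInter.1 hΦ.2 i
    have h2 : (1:ℝ)/((k:ℝ)+1+1) ≤ 1/((k:ℝ)+1) :=
      one_div_le_one_div_of_le (by positivity) (by linarith)
    simp only [Set.mem_setOf_eq] at h1 ⊢
    push_cast at h1 ⊢
    linarith
  obtain ⟨Φs, hΦsInter⟩ := IsCompact.nonempty_iInter_of_sequence_nonempty_isCompact_isClosed
    S hSmono hSnonempty (hScompact 0) hSclosed
  have hΦs : Φs ∈ stdSimplex ℝ (Fin m) := (Set.mem_iInter.1 hΦsInter 0).1
  have hcol : ∀ i, v ≤ ∑ j, Φs j * A j i := by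
    intro i
    by_contra hlt
    push_neg at hlt
    obtain ⟨k, hk⟩ := exists_nat_one_div_lt (show (0:ℝ) < v - ∑ j, Φs j * A j i by linarith)
    have := Set.mem_iInter.1 (Set.mem_iInter.1 hΦsInter k).2 i
    simp only [Set.mem_setOf_eq] at this
    -- casts already aligned
    linarith
  -- conclude
  have hub : ∀ Φ ∈ stdSimplex ℝ (Fin m), J A Φ Θs ≤ v := by
    intro Φ hΦ
    have : J A Φ Θs = ∑ j, Φ j * ∑ i, A j i * Θs i := by
      unfold J
      refine Finset.sum_congr rfl fun j _ => ?_
      rw [Finset.mul_sum]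
      refine Finset.sum_congr rfl fun i _ => ?_
      ring
    rw [this]
    calc ∑ j, Φ j * ∑ i, A j i * Θs i ≤ ∑ j, Φ j * v :=
          Finset.sum_le_sum fun j _ => mul_le_mul_of_nonneg_left (hrow j) (hΦ.1 j)
      _ = v := by rw [← Finset.sum_mul, hΦ.2, one_mul]
  have hlb : ∀ Θ ∈ stdSimplex ℝ (Fin n), v ≤ J A Φs Θ := by
    intro Θ hΘ
    have : J A Φs Θ = ∑ i, (∑ j, Φs j * A j i) * Θ i := by
      unfold J
      rw [Finset.sum_comm]
      refine Finset.sum_congr rfl fun i _ => ?_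
      rw [Finset.sum_mul]
    rw [this]
    calc v = ∑ i, v * Θ i := by rw [← Finset.mul_sum, hΘ.2, mul_one]
      _ ≤ ∑ i, (∑ j, Φs j * A j i) * Θ i :=
          Finset.sum_le_sum fun i _ => mul_le_mul_of_nonneg_right (hcol i) (hΘ.1 i)
  have hval : J A Φs Θs = v :=
    le_antisymm (hub Φs hΦs) (hlb Θs hΘs)
  refine ⟨Φs, hΦs, Θs, hΘs, fun Φ hΦ => ?_, fun Θ hΘ => ?_⟩
  · rw [hval]; exact hub Φ hΦ
  · rw [hval]; exact hlb Θ hΘ
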